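/- Deletion–restriction for regions of hyperplane arrangements: if 𝒜 is a finite arrangement of hyperplanes in R^n, H_d ∈ 𝒜 is a distinguished hyperplane, 𝒜' = 𝒜 \ {H_d}, and 𝒜'' = {H ∩ H_d : H ∈ 𝒜', H ∩ H_d ≠ ∅} viewed as an arrangement in H_d ≅ R^{n-1}, then r(𝒜) = r(𝒜') + r(𝒜''), where r denotes the number of regions (connected components of the complement). -/
import Mathlib

open Set


theorem card_components_eq {X ι : Type*} [TopologicalSpace X] [Finite ι]
    (g : ι → X → ℝ) (hcont : ∀ i, Continuous (g i)) (hnz : ∀ i x, g i x ≠ 0)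
    (hpc : ∀ s : ι → Prop, IsPreconnected {x | ∀ i, (0 < g i x ↔ s i)}) :
    Nat.card (ConnectedComponents X) =
      Nat.card {s : ι → Prop // {x | ∀ i, (0 < g i x ↔ s i)}.Nonempty} := by
  classical
  set cell : (ι → Prop) → Set X := fun s => {x | ∀ i, (0 < g i x ↔ s i)} with hcell
  have hmem : ∀ x : X, x ∈ cell (fun i => 0 < g i x) := fun x i => Iff.rfl
  have huniq : ∀ {x : X} {s}, x ∈ cell s → s = fun i => 0 < g i x := by
    intro x s hx
    funext i
    exact propext ((hx i).symm)
  have hopen : ∀ s, IsOpen (cell s) := by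
    intro s
    have : cell s = ⋂ i, {x | 0 < g i x ↔ s i} := by
      ext x; simp [hcell, mem_iInter]
    rw [this]
    refine isOpen_iInter_of_finite fun i => ?_
    by_cases h : s i
    · have : {x | 0 < g i x ↔ s i} = {x | 0 < g i x} := by
        ext x; simp [h]
      rw [this]; exact isOpen_lt continuous_const (hcont i)
    · have : {x | 0 < g i x ↔ s i} = {x | g i x < 0} := by
        ext x
        simp only [mem_setOf_eq, iff_iff_implies_and_implies]
        constructor
        · rintro ⟨h1, h2⟩
          rcases lt_or_gt_of_ne (hnz i x) with h3 | h3
          · exact h3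
          · exact absurd (h1 h3) h
        · intro hlt
          exact ⟨fun hp => absurd (lt_trans hlt hp) (lt_irrefl _), fun hs => absurd hs h⟩
      rw [this]; exact isOpen_lt (hcont i) continuous_const
  have hclopen : ∀ s, IsClopen (cell s) := by
    intro s
    refine ⟨⟨?_⟩, hopen s⟩
    have : (cell s)ᶜ = ⋃ s' ∈ {s' | s' ≠ s}, cell s' := by
      ext x
      simp only [mem_compl_iff, mem_iUnion, mem_setOf_eq]
      constructor
      · intro hx
        refine ⟨fun i => 0 < g i x, ?_, hmem x⟩
        rintro rfl; exact hx (hmem x)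
      · rintro ⟨s', hne, hx⟩ hxs
        exact hne ((huniq hx).trans (huniq hxs).symm)
    rw [this]
    exact isOpen_biUnion fun s' _ => hopen s'
  refine (Nat.card_eq_of_bijective
    (fun s : {s : ι → Prop // (cell s).Nonempty} =>
      (ConnectedComponents.mk s.2.some : ConnectedComponents X)) ⟨?_, ?_⟩).symm
  · rintro ⟨s₁, h₁⟩ ⟨s₂, h₂⟩ h
    have hx₂ : h₂.some ∈ connectedComponent h₁.some := by
      rw [← ConnectedComponents.coe_eq_coe'] at *
      exact h.symm
    have hsub : connectedComponent h₁.some ⊆ cell s₁ :=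
      isPreconnected_connectedComponent.subset_isClopen (hclopen s₁)
        ⟨h₁.some, mem_connectedComponent, h₁.some_mem⟩
    have : s₁ = s₂ := (huniq (hsub hx₂)).trans (huniq h₂.some_mem).symm
    exact Subtype.ext this
  · intro c
    obtain ⟨x, rfl⟩ := ConnectedComponents.surjective_coe c
    refine ⟨⟨fun i => 0 < g i x, ⟨x, hmem x⟩⟩, ?_⟩
    simp only
    rw [ConnectedComponents.coe_eq_coe']
    exact (hpc _).subset_connectedComponent (hmem x) (Set.Nonempty.some_mem _)


section Helpers

variable {n : ℕ}

/-- The linear functional of a hyperplane datum. -/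
def glin (p : (Fin n → ℝ) × ℝ) (x : Fin n → ℝ) : ℝ := ∑ i, p.1 i * x i

lemma glin_isLinear (p : (Fin n → ℝ) × ℝ) : IsLinearMap ℝ (glin p) := by
  constructor
  · intro x y
    simp [glin, mul_add, Finset.sum_add_distrib]
  · intro c x
    simp [glin, Finset.mul_sum]
    exact Finset.sum_congr rfl fun i _ => by ring

lemma glin_continuous (p : (Fin n → ℝ) × ℝ) : Continuous (glin p) := by
  unfold glin
  exact continuous_finset_sum _ fun i _ => (continuous_const.mul (continuous_apply i))

lemma glin_smul_add (p : (Fin n → ℝ) × ℝ) (a b : ℝ) (x y : Fin n → ℝ) :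
    glin p (a • x + b • y) = a * glin p x + b * glin p y := by
  rw [(glin_isLinear p).map_add, (glin_isLinear p).map_smul, (glin_isLinear p).map_smul]
  rfl

lemma both_sides {K : Set (Fin n → ℝ)} (hK : IsOpen K) {d : (Fin n → ℝ) × ℝ}
    (hd : d.1 ≠ 0) {x : Fin n → ℝ} (hx : x ∈ K) (hxz : glin d x = d.2) :
    (∃ y ∈ K, d.2 < glin d y) ∧ (∃ y ∈ K, glin d y < d.2) := by
  obtain ⟨i₀, hi₀⟩ : ∃ i, d.1 i ≠ 0 := by
    by_contra h
    push_neg at h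
    exact hd (funext h)
  set v : Fin n → ℝ := Pi.single i₀ 1 with hv
  have hgv : glin d v = d.1 i₀ := by
    simp [glin, hv, Pi.single_apply, mul_ite, Finset.sum_ite_eq']
  have hφ : Continuous (fun t : ℝ => x + t • v) :=
    continuous_const.add (continuous_id.smul continuous_const)
  have hU : IsOpen ((fun t : ℝ => x + t • v) ⁻¹' K) := hK.preimage hφ
  have h0 : (0 : ℝ) ∈ (fun t : ℝ => x + t • v) ⁻¹' K := by simp [hx]
  obtain ⟨ε, hε, hball⟩ := Metric.isOpen_iff.1 hU 0 h0
  have hval : ∀ t : ℝ, glin d (x + t • v) = d.2 + t * d.1 i₀ := by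
    intro t
    have : x + t • v = (1:ℝ) • x + t • v := by simp
    rw [this, glin_smul_add, hxz, hgv, one_mul]
  have hmem : ∀ t : ℝ, |t| < ε → x + t • v ∈ K := by
    intro t ht
    exact hball (by simpa [Real.dist_eq] using ht)
  rcases lt_or_gt_of_ne hi₀ with hneg | hpos
  · constructor
    · exact ⟨x + (-(ε/2)) • v, hmem _ (by rw [abs_neg, abs_of_pos (by linarith)]; linarith),
        by rw [hval]; nlinarith⟩
    · exact ⟨x + (ε/2) • v, hmem _ (by rw [abs_of_pos (by linarith)]; linarith),
        by rw [hval]; nlinarith⟩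
  · constructor
    · exact ⟨x + (ε/2) • v, hmem _ (by rw [abs_of_pos (by linarith)]; linarith),
        by rw [hval]; nlinarith⟩
    · exact ⟨x + (-(ε/2)) • v, hmem _ (by rw [abs_neg, abs_of_pos (by linarith)]; linarith),
        by rw [hval]; nlinarith⟩

lemma cross_hyperplane {K : Set (Fin n → ℝ)} (hK : Convex ℝ K) {d : (Fin n → ℝ) × ℝ}
    {x y : Fin n → ℝ} (hx : x ∈ K) (hy : y ∈ K)
    (hgx : d.2 < glin d x) (hgy : glin d y < d.2) :
    ∃ z ∈ K, glin d z = d.2 := by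
  set a : ℝ := glin d x - d.2 with ha
  set b : ℝ := d.2 - glin d y with hb
  have hapos : 0 < a := by simp [ha]; linarith
  have hbpos : 0 < b := by simp [hb]; linarith
  have habpos : 0 < a + b := by linarith
  set t : ℝ := a / (a + b) with htdef
  have ht0 : 0 ≤ t := le_of_lt (div_pos hapos habpos)
  have ht1 : t ≤ 1 := by
    rw [htdef, div_le_one habpos]; linarith
  refine ⟨(1 - t) • x + t • y, hK hx hy (by linarith) ht0 (by ring), ?_⟩
  rw [glin_smul_add]
  have : t * (a + b) = a := by
    rw [htdef, div_mul_cancel₀ _ (ne_of_gt habpos)]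
  nlinarith [this]

open Classical in
noncomputable def hsp (p : (Fin n → ℝ) × ℝ) (b : Prop) : Set (Fin n → ℝ) :=
  if b then {x | p.2 < glin p x} else {x | glin p x < p.2}

lemma hsp_true {p : (Fin n → ℝ) × ℝ} {b : Prop} (hb : b) :
    hsp p b = {x | p.2 < glin p x} := if_pos hb

lemma hsp_false {p : (Fin n → ℝ) × ℝ} {b : Prop} (hb : ¬b) :
    hsp p b = {x | glin p x < p.2} := if_neg hb

lemma hsp_ne {p : (Fin n → ℝ) × ℝ} {b : Prop} {x : Fin n → ℝ} (hx : x ∈ hsp p b) :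
    glin p x ≠ p.2 := by
  by_cases hb : b
  · rw [hsp_true hb] at hx; exact ne_of_gt hx
  · rw [hsp_false hb] at hx; exact ne_of_lt hx

lemma mem_hsp_iff {p : (Fin n → ℝ) × ℝ} {b : Prop} {x : Fin n → ℝ}
    (hne : glin p x ≠ p.2) : x ∈ hsp p b ↔ (p.2 < glin p x ↔ b) := by
  by_cases hb : b
  · rw [hsp_true hb]; simp [hb]
  · rw [hsp_false hb]
    simp only [mem_setOf_eq, iff_iff_implies_and_implies]
    constructor
    · intro h
      exact ⟨fun hp => absurd (lt_trans h hp) (lt_irrefl _), fun h' => absurd h' hb⟩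
    · rintro ⟨h1, -⟩
      rcases lt_or_gt_of_ne hne with h | h
      · exact h
      · exact absurd (h1 h) hb

lemma hsp_open (p : (Fin n → ℝ) × ℝ) (b : Prop) : IsOpen (hsp p b) := by
  by_cases hb : b
  · rw [hsp_true hb]; exact isOpen_lt continuous_const (glin_continuous p)
  · rw [hsp_false hb]; exact isOpen_lt (glin_continuous p) continuous_const

lemma hsp_convex (p : (Fin n → ℝ) × ℝ) (b : Prop) : Convex ℝ (hsp p b) := by
  by_cases hb : b
  · rw [hsp_true hb]; exact convex_halfSpace_gt (glin_isLinear p) _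
  · rw [hsp_false hb]; exact convex_halfSpace_lt (glin_isLinear p) _

noncomputable def Kcell (F : Finset ((Fin n → ℝ) × ℝ)) (s : {p // p ∈ F} → Prop) :
    Set (Fin n → ℝ) := ⋂ q : {p // p ∈ F}, hsp q.1 (s q)

lemma Kcell_open (F : Finset ((Fin n → ℝ) × ℝ)) (s : {p // p ∈ F} → Prop) :
    IsOpen (Kcell F s) :=
  isOpen_iInter_of_finite fun q => hsp_open q.1 (s q)

lemma Kcell_convex (F : Finset ((Fin n → ℝ) × ℝ)) (s : {p // p ∈ F} → Prop) :
    Convex ℝ (Kcell F s) :=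
  convex_iInter fun q => hsp_convex q.1 (s q)

lemma mem_Kcell {F : Finset ((Fin n → ℝ) × ℝ)} {s : {p // p ∈ F} → Prop}
    {x : Fin n → ℝ} : x ∈ Kcell F s ↔ ∀ q : {p // p ∈ F}, x ∈ hsp q.1 (s q) :=
  mem_iInter

/-- Cut dichotomy for an open convex set. -/
lemma cut_iff {K : Set (Fin n → ℝ)} (hKo : IsOpen K) (hKc : Convex ℝ K)
    {d : (Fin n → ℝ) × ℝ} (hd1 : d.1 ≠ 0) :
    (K ∩ {x | glin d x = d.2}).Nonempty ↔
      ((K ∩ {x | d.2 < glin d x}).Nonempty ∧ (K ∩ {x | glin d x < d.2}).Nonempty) := by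
  constructor
  · rintro ⟨x, hxK, hxZ⟩
    obtain ⟨⟨y1, hy1, hy1'⟩, ⟨y2, hy2, hy2'⟩⟩ := both_sides hKo hd1 hxK hxZ
    exact ⟨⟨y1, hy1, hy1'⟩, ⟨y2, hy2, hy2'⟩⟩
  · rintro ⟨⟨x, hxK, hx⟩, ⟨y, hyK, hy⟩⟩
    obtain ⟨z, hzK, hz⟩ := cross_hyperplane hKc hxK hyK hx hy
    exact ⟨z, hzK, hz⟩

lemma nonempty_side {K : Set (Fin n → ℝ)} (hKo : IsOpen K)
    {d : (Fin n → ℝ) × ℝ} (hd1 : d.1 ≠ 0) (hK : K.Nonempty) :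
    (K ∩ {x | d.2 < glin d x}).Nonempty ∨ (K ∩ {x | glin d x < d.2}).Nonempty := by
  obtain ⟨x, hx⟩ := hK
  by_cases hxz : glin d x = d.2
  · obtain ⟨⟨y, hy, hy'⟩, -⟩ := both_sides hKo hd1 hx hxz
    exact Or.inl ⟨y, hy, hy'⟩
  · rcases lt_or_gt_of_ne hxz with h | h
    · exact Or.inr ⟨x, hx, h⟩
    · exact Or.inl ⟨x, hx, h⟩

section Counting

variable {𝒜 : Finset ((Fin n → ℝ) × ℝ)} {d : (Fin n → ℝ) × ℝ}

/-- Inclusion of the erased arrangement into the full one. -/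
def aincl (q : {p // p ∈ 𝒜.erase d}) : {p // p ∈ 𝒜} :=
  ⟨q.1, Finset.mem_of_mem_erase q.2⟩

open Classical in
/-- Extend a sign vector on `𝒜.erase d` to one on `𝒜`. -/
noncomputable def sext (s : {p // p ∈ 𝒜.erase d} → Prop) (ε : Prop) :
    {p // p ∈ 𝒜} → Prop :=
  fun p => if h : (p : (Fin n → ℝ) × ℝ) = d then ε
    else s ⟨p.1, Finset.mem_erase.2 ⟨h, p.2⟩⟩

lemma sext_aincl (s : {p // p ∈ 𝒜.erase d} → Prop) (ε : Prop)
    (q : {p // p ∈ 𝒜.erase d}) : sext s ε (aincl q) = s q := by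
  have hne : (aincl q : (Fin n → ℝ) × ℝ) ≠ d := (Finset.mem_erase.1 q.2).1
  rw [sext, dif_neg hne]
  exact congrArg s (Subtype.ext rfl)

lemma sext_d (hd : d ∈ 𝒜) (s : {p // p ∈ 𝒜.erase d} → Prop) (ε : Prop) :
    sext s ε (⟨d, hd⟩ : {p // p ∈ 𝒜}) = ε := dif_pos rfl

lemma Kcell_restrict (hd : d ∈ 𝒜) (σ : {p // p ∈ 𝒜} → Prop) :
    Kcell 𝒜 σ = Kcell (𝒜.erase d) (fun q => σ (aincl q)) ∩ hsp d (σ ⟨d, hd⟩) := by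
  ext x
  simp only [mem_Kcell, mem_inter_iff]
  constructor
  · intro h
    exact ⟨fun q => h (aincl q), h ⟨d, hd⟩⟩
  · rintro ⟨h1, h2⟩ p
    by_cases hp : (p : (Fin n → ℝ) × ℝ) = d
    · have : p = (⟨d, hd⟩ : {p // p ∈ 𝒜}) := Subtype.ext hp
      rw [this]; exact h2
    · have hmem : (p : (Fin n → ℝ) × ℝ) ∈ 𝒜.erase d := Finset.mem_erase.2 ⟨hp, p.2⟩
      have : p = aincl ⟨p.1, hmem⟩ := Subtype.ext rfl
      rw [this]; exact h1 ⟨p.1, hmem⟩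

lemma counting (hd : d ∈ 𝒜) (hd1 : d.1 ≠ 0) :
    Nat.card {σ : {p // p ∈ 𝒜} → Prop // (Kcell 𝒜 σ).Nonempty} =
      Nat.card {s : {p // p ∈ 𝒜.erase d} → Prop // (Kcell (𝒜.erase d) s).Nonempty} +
      Nat.card {s : {p // p ∈ 𝒜.erase d} → Prop //
        (Kcell (𝒜.erase d) s ∩ {x | glin d x = d.2}).Nonempty} := by
  classical
  rw [← Nat.card_sum]
  refine Nat.card_eq_of_bijective (fun σ =>
    if hz : (Kcell (𝒜.erase d) (fun q => σ.1 (aincl q)) ∩ {x | glin d x = d.2}).Nonempty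
        ∧ σ.1 ⟨d, hd⟩
    then Sum.inr ⟨fun q => σ.1 (aincl q), hz.1⟩
    else Sum.inl ⟨fun q => σ.1 (aincl q), by
      have h := σ.2
      rw [Kcell_restrict hd σ.1] at h
      exact Set.Nonempty.mono Set.inter_subset_left h⟩) ⟨?_, ?_⟩
  · -- injectivity
    rintro ⟨σ₁, h₁⟩ ⟨σ₂, h₂⟩ h
    simp only at h
    by_cases hz1 : (Kcell (𝒜.erase d) (fun q => σ₁ (aincl q)) ∩
        {x | glin d x = d.2}).Nonempty ∧ σ₁ ⟨d, hd⟩ <;>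
      by_cases hz2 : (Kcell (𝒜.erase d) (fun q => σ₂ (aincl q)) ∩
        {x | glin d x = d.2}).Nonempty ∧ σ₂ ⟨d, hd⟩
    · -- both inr
      rw [dif_pos hz1, dif_pos hz2] at h
      simp only [Sum.inr.injEq, Subtype.mk.injEq] at h
      refine Subtype.ext (funext fun p => ?_)
      by_cases hp : (p : (Fin n → ℝ) × ℝ) = d
      · have hpd : p = (⟨d, hd⟩ : {p // p ∈ 𝒜}) := Subtype.ext hp
        rw [hpd]
        exact propext (iff_of_true hz1.2 hz2.2)
      · have hmem : (p : (Fin n → ℝ) × ℝ) ∈ 𝒜.erase d := Finset.mem_erase.2 ⟨hp, p.2⟩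
        have hpq : p = aincl ⟨p.1, hmem⟩ := Subtype.ext rfl
        rw [hpq]
        exact congrFun h ⟨p.1, hmem⟩
    · rw [dif_pos hz1, dif_neg hz2] at h
      exact absurd h (by simp)
    · rw [dif_neg hz1, dif_pos hz2] at h
      exact absurd h (by simp)
    · -- both inl
      rw [dif_neg hz1, dif_neg hz2] at h
      simp only [Sum.inl.injEq, Subtype.mk.injEq] at h
      have hiff : σ₁ ⟨d, hd⟩ ↔ σ₂ ⟨d, hd⟩ := by
        rw [← h] at hz2
        by_cases hcut :
            (Kcell (𝒜.erase d) (fun q => σ₁ (aincl q)) ∩ {x | glin d x = d.2}).Nonempty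
        · have n1 : ¬ σ₁ ⟨d, hd⟩ := fun hh => hz1 ⟨hcut, hh⟩
          have n2 : ¬ σ₂ ⟨d, hd⟩ := fun hh => hz2 ⟨hcut, hh⟩
          exact iff_of_false n1 n2
        · by_cases ha : σ₁ ⟨d, hd⟩ <;> by_cases hb : σ₂ ⟨d, hd⟩
          · exact iff_of_true ha hb
          · exfalso
            apply hcut
            rw [cut_iff (Kcell_open _ _) (Kcell_convex _ _) hd1]
            constructor
            · have := h₁
              rw [Kcell_restrict hd σ₁, hsp_true ha] at this
              exact this
            · have := h₂
              rw [Kcell_restrict hd σ₂, hsp_false hb, ← h] at this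
              exact this
          · exfalso
            apply hcut
            rw [cut_iff (Kcell_open _ _) (Kcell_convex _ _) hd1]
            constructor
            · have := h₂
              rw [Kcell_restrict hd σ₂, hsp_true hb, ← h] at this
              exact this
            · have := h₁
              rw [Kcell_restrict hd σ₁, hsp_false ha] at this
              exact this
          · exact iff_of_false ha hb
      refine Subtype.ext (funext fun p => ?_)
      by_cases hp : (p : (Fin n → ℝ) × ℝ) = d
      · have hpd : p = (⟨d, hd⟩ : {p // p ∈ 𝒜}) := Subtype.ext hp
        rw [hpd]
        exact propext hiff
      · have hmem : (p : (Fin n → ℝ) × ℝ) ∈ 𝒜.erase d := Finset.mem_erase.2 ⟨hp, p.2⟩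
        have hpq : p = aincl ⟨p.1, hmem⟩ := Subtype.ext rfl
        rw [hpq]
        exact congrFun h ⟨p.1, hmem⟩
  · -- surjectivity
    rintro (⟨s, hs⟩ | ⟨s, hcut⟩)
    · have hrest : ∀ ε : Prop, (fun q => sext s ε (aincl q)) = s :=
        fun ε => funext fun q => sext_aincl s ε q
      by_cases hc : (Kcell (𝒜.erase d) s ∩ {x | glin d x = d.2}).Nonempty
      · -- cut region: choose negative side
        have hne : (Kcell 𝒜 (sext s False)).Nonempty := by
          rw [Kcell_restrict hd, hrest, sext_d hd, hsp_false not_false]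
          exact ((cut_iff (Kcell_open _ _) (Kcell_convex _ _) hd1).1 hc).2
        refine ⟨⟨sext s False, hne⟩, ?_⟩
        have hcond : ¬((Kcell (𝒜.erase d)
            (fun q => sext s False (aincl q)) ∩ {x | glin d x = d.2}).Nonempty
            ∧ sext s False (⟨d, hd⟩ : {p // p ∈ 𝒜})) := by
          rintro ⟨-, hdd⟩
          rw [sext_d hd] at hdd
          exact hdd
        simp only [dif_neg hcond]
        exact congrArg Sum.inl (Subtype.ext (hrest False))
      · rcases nonempty_side (Kcell_open _ _) hd1 hs with hp | hn
        · have hne : (Kcell 𝒜 (sext s True)).Nonempty := by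
            rw [Kcell_restrict hd, hrest, sext_d hd, hsp_true trivial]
            exact hp
          refine ⟨⟨sext s True, hne⟩, ?_⟩
          have hcond : ¬((Kcell (𝒜.erase d)
              (fun q => sext s True (aincl q)) ∩ {x | glin d x = d.2}).Nonempty
              ∧ sext s True (⟨d, hd⟩ : {p // p ∈ 𝒜})) := by
            rintro ⟨hcc, -⟩
            rw [hrest] at hcc
            exact hc hcc
          simp only [dif_neg hcond]
          exact congrArg Sum.inl (Subtype.ext (hrest True))
        · have hne : (Kcell 𝒜 (sext s False)).Nonempty := by
            rw [Kcell_restrict hd, hrest, sext_d hd, hsp_false not_false]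
            exact hn
          refine ⟨⟨sext s False, hne⟩, ?_⟩
          have hcond : ¬((Kcell (𝒜.erase d)
              (fun q => sext s False (aincl q)) ∩ {x | glin d x = d.2}).Nonempty
              ∧ sext s False (⟨d, hd⟩ : {p // p ∈ 𝒜})) := by
            rintro ⟨hcc, -⟩
            rw [hrest] at hcc
            exact hc hcc
          simp only [dif_neg hcond]
          exact congrArg Sum.inl (Subtype.ext (hrest False))
    · have hrest : (fun q => sext s True (aincl q)) = s :=
        funext fun q => sext_aincl s True q
      have hne : (Kcell 𝒜 (sext s True)).Nonempty := by
        rw [Kcell_restrict hd, hrest, sext_d hd, hsp_true trivial]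
        exact ((cut_iff (Kcell_open _ _) (Kcell_convex _ _) hd1).1 hcut).1
      refine ⟨⟨sext s True, hne⟩, ?_⟩
      have hcond : (Kcell (𝒜.erase d)
          (fun q => sext s True (aincl q)) ∩ {x | glin d x = d.2}).Nonempty
          ∧ sext s True (⟨d, hd⟩ : {p // p ∈ 𝒜}) := by
        constructor
        · rw [hrest]; exact hcut
        · rw [sext_d hd]; trivial
      simp only [dif_pos hcond]
      exact congrArg Sum.inr (Subtype.ext hrest)


lemma space_card (F : Finset ((Fin n → ℝ) × ℝ)) :
    Nat.card (ConnectedComponents {x : Fin n → ℝ // ∀ p ∈ F, glin p x ≠ p.2}) =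
      Nat.card {s : {p // p ∈ F} → Prop // (Kcell F s).Nonempty} := by
  classical
  have himg : ∀ s : {p // p ∈ F} → Prop,
      (Subtype.val '' {x : {x : Fin n → ℝ // ∀ p ∈ F, glin p x ≠ p.2} |
        ∀ q : {p // p ∈ F}, (0 < glin q.1 x.1 - q.1.2 ↔ s q)}) = Kcell F s := by
    intro s
    ext y
    simp only [mem_image, mem_setOf_eq]
    constructor
    · rintro ⟨x, hx, rfl⟩
      exact mem_Kcell.2 fun q =>
        (mem_hsp_iff (x.2 q.1 q.2)).2 (Iff.trans sub_pos.symm (hx q))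
    · intro hy
      have hne : ∀ p ∈ F, glin p y ≠ p.2 := fun p hp => hsp_ne (mem_Kcell.1 hy ⟨p, hp⟩)
      exact ⟨⟨y, hne⟩, fun q =>
        Iff.trans sub_pos ((mem_hsp_iff (hne q.1 q.2)).1 (mem_Kcell.1 hy q)), rfl⟩
  rw [card_components_eq (fun (q : {p // p ∈ F}) x => glin q.1 x.1 - q.1.2)
    (fun q => ((glin_continuous q.1).comp continuous_subtype_val).sub continuous_const)
    (fun q (x : {x : Fin n → ℝ // ∀ p ∈ F, glin p x ≠ p.2}) => sub_ne_zero.2 (x.2 q.1 q.2))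
    (fun s => by
      show IsPreconnected
        {x : {x : Fin n → ℝ // ∀ p ∈ F, glin p x ≠ p.2} |
          ∀ q : {p // p ∈ F}, (0 < glin q.1 x.1 - q.1.2 ↔ s q)}
      exact Topology.IsInducing.subtypeVal.isPreconnected_image.mp
        ((himg s).symm ▸ (Kcell_convex F s).isPreconnected))]
  exact Nat.card_congr (Equiv.subtypeEquivRight fun s => by
    rw [← himg s, Set.image_nonempty])

lemma restricted_card (F : Finset ((Fin n → ℝ) × ℝ)) (d : (Fin n → ℝ) × ℝ) :
    Nat.card (ConnectedComponents
        {x : Fin n → ℝ // glin d x = d.2 ∧ ∀ p ∈ F, glin p x ≠ p.2}) =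
      Nat.card {s : {p // p ∈ F} → Prop //
        (Kcell F s ∩ {x | glin d x = d.2}).Nonempty} := by
  classical
  have himg : ∀ s : {p // p ∈ F} → Prop,
      (Subtype.val '' {x : {x : Fin n → ℝ // glin d x = d.2 ∧ ∀ p ∈ F, glin p x ≠ p.2} |
        ∀ q : {p // p ∈ F}, (0 < glin q.1 x.1 - q.1.2 ↔ s q)}) =
        Kcell F s ∩ {x | glin d x = d.2} := by
    intro s
    ext y
    simp only [mem_image, mem_setOf_eq, mem_inter_iff]
    constructor
    · rintro ⟨x, hx, rfl⟩
      exact ⟨mem_Kcell.2 fun q =>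
        (mem_hsp_iff (x.2.2 q.1 q.2)).2 (Iff.trans sub_pos.symm (hx q)), x.2.1⟩
    · rintro ⟨hy, hyz⟩
      have hne : ∀ p ∈ F, glin p y ≠ p.2 := fun p hp => hsp_ne (mem_Kcell.1 hy ⟨p, hp⟩)
      exact ⟨⟨y, hyz, hne⟩, fun q =>
        Iff.trans sub_pos ((mem_hsp_iff (hne q.1 q.2)).1 (mem_Kcell.1 hy q)), rfl⟩
  rw [card_components_eq (fun (q : {p // p ∈ F}) x => glin q.1 x.1 - q.1.2)
    (fun q => ((glin_continuous q.1).comp continuous_subtype_val).sub continuous_const)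
    (fun q (x : {x : Fin n → ℝ // glin d x = d.2 ∧ ∀ p ∈ F, glin p x ≠ p.2}) => sub_ne_zero.2 (x.2.2 q.1 q.2))
    (fun s => by
      show IsPreconnected
        {x : {x : Fin n → ℝ // glin d x = d.2 ∧ ∀ p ∈ F, glin p x ≠ p.2} |
          ∀ q : {p // p ∈ F}, (0 < glin q.1 x.1 - q.1.2 ↔ s q)}
      exact Topology.IsInducing.subtypeVal.isPreconnected_image.mp
        ((himg s).symm ▸
          ((Kcell_convex F s).inter (convex_hyperplane (glin_isLinear d) d.2)).isPreconnected))]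
  exact Nat.card_congr (Equiv.subtypeEquivRight fun s => by
    rw [← himg s, Set.image_nonempty])

end Counting

/-- Deletion–restriction for the number of regions of a hyperplane arrangement:
`r(𝒜) = r(𝒜') + r(𝒜'')`, where `𝒜' = 𝒜 \\ {H_d}` and `𝒜''` is the arrangement
induced in the distinguished hyperplane `H_d`. -/
theorem deletion_restriction_region_count (n : ℕ)
    (𝒜 : Finset ((Fin n → ℝ) × ℝ))
    (hnz : ∀ p ∈ 𝒜, p.1 ≠ 0)
    (hinj : ∀ p ∈ 𝒜, ∀ q ∈ 𝒜,
      {x : Fin n → ℝ | (∑ i, p.1 i * x i) = p.2} =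
        {x : Fin n → ℝ | (∑ i, q.1 i * x i) = q.2} → p = q)
    (d : (Fin n → ℝ) × ℝ) (hd : d ∈ 𝒜) :
    Nat.card (ConnectedComponents
        {x : Fin n → ℝ // ∀ p ∈ 𝒜, (∑ i, p.1 i * x i) ≠ p.2}) =
      Nat.card (ConnectedComponents
        {x : Fin n → ℝ // ∀ p ∈ 𝒜.erase d, (∑ i, p.1 i * x i) ≠ p.2}) +
      Nat.card (ConnectedComponents
        {x : Fin n → ℝ // (∑ i, d.1 i * x i) = d.2 ∧
          ∀ p ∈ 𝒜.erase d, (∑ i, p.1 i * x i) ≠ p.2}) := by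
  have hd1 : d.1 ≠ 0 := hnz d hd
  show Nat.card (ConnectedComponents {x : Fin n → ℝ // ∀ p ∈ 𝒜, glin p x ≠ p.2}) =
    Nat.card (ConnectedComponents
      {x : Fin n → ℝ // ∀ p ∈ 𝒜.erase d, glin p x ≠ p.2}) +
    Nat.card (ConnectedComponents
      {x : Fin n → ℝ // glin d x = d.2 ∧ ∀ p ∈ 𝒜.erase d, glin p x ≠ p.2})
  rw [space_card 𝒜, space_card (𝒜.erase d), restricted_card (𝒜.erase d) d]
  exact counting hd hd1

end Helpers
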